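/- Let p be an odd prime, n ≥ 2, and G ≅ Z_{p^n} × Z_p. Then there exists a proper Cayley digraph Γ on G with Cayley index exactly p whose automorphism group contains a nonabelian regular subgroup. -/

import Mathlib

set_option linter.unusedSectionVars false
set_option maxHeartbeats 1000000

/-- The automorphism group of a digraph given by an adjacency relation. -/
def dAut {V : Type*} (adj : V → V → Prop) : Subgroup (Equiv.Perm V) where
  carrier := {σ | ∀ u v : V, adj (σ u) (σ v) ↔ adj u v}
  one_mem' := by intro u v; rfl
  mul_mem' := by
    intro a b ha hb u v
    simp only [Set.mem_setOf_eq] at *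
    rw [Equiv.Perm.mul_apply, Equiv.Perm.mul_apply, ha, hb]
  inv_mem' := by
    intro a ha u v
    simpa using (ha (a⁻¹ u) (a⁻¹ v)).symm

/-- Adjacency of the Cayley digraph `Cay(G,S)`. -/
def cayAdj (G : Type*) [Group G] (S : Set G) : G → G → Prop :=
  fun u v => v * u⁻¹ ∈ S

/-- The right regular representation of `G` in `Equiv.Perm G`. -/
def rightReg (G : Type*) [Group G] : G →* Equiv.Perm G where
  toFun g := Equiv.mulRight g⁻¹
  map_one' := by ext x; simp
  map_mul' := by intro a b; ext x; simp [mul_assoc]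

/-- The right regular representation of `G` as a subgroup of `Aut(Cay(G,S))`. -/
def cayleyRR (G : Type*) [Group G] (S : Set G) :
    Subgroup (dAut (cayAdj G S)) :=
  ((rightReg G).range).subgroupOf (dAut (cayAdj G S))

/-- A subgroup of `Equiv.Perm V` is regular if it is sharply transitive on `V`. -/
def IsRegularSub {V : Type*} (H : Subgroup (Equiv.Perm V)) : Prop :=
  ∀ v w : V, ∃! h : H, (h : Equiv.Perm V) v = w

/-- Adjacency of the cartesian product of two digraphs. -/
def cartAdj {α β : Type*} (adjG : α → α → Prop) (adjD : β → β → Prop) :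
    α × β → α × β → Prop :=
  fun u v => (u.1 = v.1 ∧ adjD u.2 v.2) ∨ (u.2 = v.2 ∧ adjG u.1 v.1)

/-- `pathLe adj i u v` : there is a directed path of length at most `i` from `u` to `v`. -/
def pathLe {V : Type*} (adj : V → V → Prop) : ℕ → V → V → Prop
  | 0, u, v => u = v
  | (n+1), u, v => pathLe adj n u v ∨ ∃ w, pathLe adj n u w ∧ adj w v


namespace S12
variable (p m : ℕ)
abbrev V := Multiplicative (ZMod (p ^ (m + 2))) × Multiplicative (ZMod p)
def pr : ZMod (p ^ (m + 2)) →+* ZMod p := ZMod.castHom (dvd_pow_self p (by omega)) _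
def lf (b : ZMod p) : ZMod (p ^ (m + 2)) := ((b.val * p ^ (m + 1) : ℕ) : ZMod (p ^ (m + 2)))
def cc (i : ZMod p) : ZMod p := i * (i - 1) * (2 : ZMod p)⁻¹
def mk' (a : ZMod (p ^ (m+2))) (b : ZMod p) : V p m :=
  (Multiplicative.ofAdd a, Multiplicative.ofAdd b)
def xi (i : ZMod p) : V p m := mk' p m (1 + lf p m (cc p i)) i
def et (b : ZMod p) : V p m := mk' p m (lf p m b) 1
def SS : Set (V p m) := Set.range (xi p m) ∪ Set.range (et p m)
variable [Fact p.Prime]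

lemma lf_natCast (k : ℕ) : lf p m ((k : ZMod p)) = ((k * p ^ (m + 1) : ℕ) : ZMod (p ^ (m + 2))) := by
  unfold lf
  rw [ZMod.val_natCast]
  have h : k * p ^ (m+1) = k % p * p ^ (m+1) + (k / p) * p ^ (m+2) := by
    conv_lhs => rw [← Nat.mod_add_div k p]
    ring
  rw [h, Nat.cast_add, Nat.cast_mul (k/p), ZMod.natCast_self, mul_zero, add_zero]

lemma lf_zero : lf p m 0 = 0 := by unfold lf; simp

lemma lf_add (b b' : ZMod p) : lf p m (b + b') = lf p m b + lf p m b' := by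
  have h : ((b.val + b'.val : ℕ) : ZMod p) = b + b' := by
    push_cast [ZMod.natCast_val, ZMod.cast_id]; ring
  rw [← h, lf_natCast]
  unfold lf
  push_cast
  ring

lemma pr_lf (b : ZMod p) : pr p m (lf p m b) = 0 := by
  unfold lf pr
  rw [map_natCast]
  push_cast
  rw [ZMod.natCast_self]
  simp

lemma lf_eq_zero (b : ZMod p) (h : lf p m b = 0) : b = 0 := by
  unfold lf at h
  rw [ZMod.natCast_eq_zero_iff] at h
  have hp' : 0 < p := (Fact.out : p.Prime).pos
  have hd : p ∣ b.val := by
    have h2 : p ^ (m+1) * p ∣ p ^ (m+1) * b.val := by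
      rw [← pow_succ]
      rw [Nat.mul_comm (p ^ (m+1)) b.val]
      exact h
    exact (Nat.mul_dvd_mul_iff_left (pow_pos hp' (m+1))).mp h2
  have hv : b.val = 0 := Nat.eq_zero_of_dvd_of_lt hd b.val_lt
  exact (ZMod.val_eq_zero b).mp hv

lemma lf_inj (b b' : ZMod p) (h : lf p m b = lf p m b') : b = b' := by
  have h0 : lf p m (b - b') = 0 := by
    have h1 := lf_add p m (b - b') b'
    rw [sub_add_cancel, h] at h1
    have h2 := h1.symm
    rwa [add_eq_right] at h2
  have := lf_eq_zero p m _ h0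
  exact sub_eq_zero.mp this


lemma two_ne_zero' (hodd : Odd p) : (2 : ZMod p) ≠ 0 := by
  have hp : p.Prime := Fact.out
  intro h
  have : (p : ℕ) ∣ 2 := by
    have := (ZMod.natCast_eq_zero_iff 2 p).mp (by exact_mod_cast h)
    exact this
  have hp2 : p = 2 := (Nat.prime_dvd_prime_iff_eq hp Nat.prime_two).mp this
  rw [hp2] at hodd
  exact (Nat.not_odd_iff_even.mpr (by decide)) hodd

lemma cc_succ (hodd : Odd p) (i : ZMod p) : cc p (i + 1) = cc p i + i := by
  have h2 : (2 : ZMod p) ≠ 0 := two_ne_zero' p hodd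
  unfold cc
  field_simp
  ring

lemma cc_zero : cc p 0 = 0 := by unfold cc; ring


lemma pr_one : pr p m 1 = 1 := map_one _

lemma lf_sub (b b' : ZMod p) : lf p m (b - b') = lf p m b - lf p m b' := by
  have := lf_add p m (b - b') b'
  rw [sub_add_cancel] at this
  linear_combination -this

lemma mk'_inj {a a' b b'} (h : mk' p m a b = mk' p m a' b') : a = a' ∧ b = b' := by
  unfold mk' at h
  rw [Prod.ext_iff] at h
  exact ⟨by simpa using congrArg Multiplicative.toAdd h.1,
         by simpa using congrArg Multiplicative.toAdd h.2⟩

lemma mk'_mul (a a' b b') : mk' p m a b * mk' p m a' b' = mk' p m (a + a') (b + b') := rfl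
lemma mk'_inv (a b) : (mk' p m a b)⁻¹ = mk' p m (-a) (-b) := rfl
lemma mk'_one : (1 : V p m) = mk' p m 0 0 := rfl

lemma mk'_div (a a' b b') : mk' p m a b * (mk' p m a' b')⁻¹ = mk' p m (a - a') (b - b') := by
  rw [mk'_inv, mk'_mul, sub_eq_add_neg, sub_eq_add_neg]

lemma xi_inj {i j : ZMod p} (h : xi p m i = xi p m j) : i = j := (mk'_inj p m h).2

lemma et_inj {b b' : ZMod p} (h : et p m b = et p m b') : b = b' :=
  lf_inj p m _ _ (mk'_inj p m h).1

lemma one_ne_zero'' : (1 : ZMod p) ≠ 0 := by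
  haveI : Fact (1 < p) := ⟨(Fact.out : p.Prime).one_lt⟩
  exact one_ne_zero

lemma xi_ne_et (i b : ZMod p) : xi p m i ≠ et p m b := by
  haveI : Fact (1 < p) := ⟨(Fact.out : p.Prime).one_lt⟩
  intro h
  have hc := congrArg (pr p m) (mk'_inj p m h).1
  rw [map_add, pr_one, pr_lf, add_zero, pr_lf] at hc
  exact one_ne_zero'' p hc

lemma mem_SS_iff {g : V p m} :
    g ∈ SS p m ↔ (∃ i, g = xi p m i) ∨ (∃ b, g = et p m b) := by
  unfold SS
  simp [Set.mem_union, Set.mem_range, eq_comm]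

/-- characterization by coordinates -/
lemma mk'_mem_SS {a b} :
    mk' p m a b ∈ SS p m ↔ (a = 1 + lf p m (cc p b)) ∨ (∃ b', a = lf p m b' ∧ b = 1) := by
  rw [mem_SS_iff]
  constructor
  · rintro (⟨i, hi⟩ | ⟨b', hb⟩)
    · obtain ⟨h1, h2⟩ := mk'_inj p m hi
      exact Or.inl (by rw [h1, h2])
    · obtain ⟨h1, h2⟩ := mk'_inj p m hb
      exact Or.inr ⟨b', h1, h2⟩
  · rintro (h | ⟨b', h1, h2⟩)
    · exact Or.inl ⟨b, by rw [h]; rfl⟩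
    · exact Or.inr ⟨b', by rw [h1, h2]; rfl⟩

lemma pr_xi_coord (i : ZMod p) : pr p m (1 + lf p m (cc p i)) = 1 := by
  rw [map_add, pr_lf, pr_one, add_zero]

-- key algebraic identities
lemma xi_div_xi (hodd : Odd p) (i : ZMod p) : xi p m (i+1) * (xi p m i)⁻¹ = et p m i := by
  unfold xi et
  rw [mk'_div]
  congr 1
  · rw [cc_succ p hodd, add_comm 1 (lf p m (cc p i)), lf_add]; ring
  · ring

lemma xi_div_et (hodd : Odd p) (b : ZMod p) : xi p m (b+1) * (et p m b)⁻¹ = xi p m b := by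
  unfold xi et
  rw [mk'_div]
  congr 1
  · rw [cc_succ p hodd, lf_add]; ring
  · ring

section arcs
variable (hodd : Odd p)

lemma arc_xi_xi {i j : ZMod p} :
    cayAdj (V p m) (SS p m) (xi p m i) (xi p m j) ↔ j = i + 1 := by
  unfold cayAdj xi
  rw [mk'_div, mk'_mem_SS]
  constructor
  · rintro (h | ⟨b', h1, h2⟩)
    · exfalso
      have := congrArg (pr p m) h
      rw [map_sub, pr_xi_coord, pr_xi_coord, pr_xi_coord, sub_self] at this
      exact one_ne_zero'' p this.symm
    · linear_combination h2
  · intro h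
    right
    refine ⟨cc p j - cc p i, ?_, by rw [h]; ring⟩
    rw [lf_sub]
    ring

lemma arc_et_xi (hodd : Odd p) {b j : ZMod p} :
    cayAdj (V p m) (SS p m) (et p m b) (xi p m j) ↔ j = b + 1 := by
  unfold cayAdj xi et
  rw [mk'_div, mk'_mem_SS]
  constructor
  · rintro (h | ⟨b', h1, h2⟩)
    · -- 1 + lf (cc j) - lf b = 1 + lf (cc (j-1))
      have h2 : lf p m (cc p j - b) = lf p m (cc p (j - 1)) := by
        rw [lf_sub]; linear_combination h
      have h3 := lf_inj p m _ _ h2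
      have h4 := cc_succ p hodd (j - 1)
      rw [sub_add_cancel] at h4
      have hb : b = j - 1 := by linear_combination h4 - h3
      linear_combination -hb
    · exfalso
      haveI : Fact (1 < p) := ⟨(Fact.out : p.Prime).one_lt⟩
      have := congrArg (pr p m) h1
      simp only [map_sub, map_add, pr_one, pr_lf] at this
      simp at this
  · intro h
    left
    have h4 := cc_succ p hodd b
    rw [h, add_sub_cancel_right, h4, lf_add]
    ring

lemma arc_xi_et (hodd : Odd p) {i b : ZMod p} : ¬ cayAdj (V p m) (SS p m) (xi p m i) (et p m b) := by
  unfold cayAdj xi et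
  rw [mk'_div, mk'_mem_SS]
  rintro (h | ⟨b', h1, h2⟩)
  · have := congrArg (pr p m) h
    simp only [map_sub, map_add, pr_one, pr_lf] at this
    have h2 : (2 : ZMod p) = 0 := by linear_combination -this
    exact two_ne_zero' p hodd h2
  · have := congrArg (pr p m) h1
    simp only [map_sub, map_add, pr_one, pr_lf] at this
    exact one_ne_zero'' p (by linear_combination -this)

lemma arc_et_et {b b' : ZMod p} : ¬ cayAdj (V p m) (SS p m) (et p m b) (et p m b') := by
  unfold cayAdj et
  rw [mk'_div, mk'_mem_SS]
  rintro (h | ⟨b'', h1, h2⟩)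
  · have := congrArg (pr p m) h
    simp only [map_sub, map_add, pr_one, pr_lf] at this
    exact one_ne_zero'' p (by linear_combination -this)
  · exact one_ne_zero'' p (by linear_combination -h2)

lemma arc_translate (s t u : V p m) :
    cayAdj (V p m) (SS p m) (s * u) (t * u) ↔ cayAdj (V p m) (SS p m) s t := by
  unfold cayAdj
  have h : t * u * (s * u)⁻¹ = t * s⁻¹ := by
    rw [mul_inv_rev, ← mul_assoc, mul_inv_cancel_right]
  rw [h]

end arcs


instance : NeZero p := ⟨(Fact.out : p.Prime).ne_zero⟩

lemma mk'_eta (u : V p m) : u = mk' p m u.1.toAdd u.2.toAdd := rfl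

def alphaHom : V p m →* V p m where
  toFun u := mk' p m (u.1.toAdd + lf p m u.2.toAdd) (pr p m u.1.toAdd + u.2.toAdd)
  map_one' := by
    show mk' p m (0 + lf p m 0) (pr p m 0 + 0) = 1
    rw [lf_zero, map_zero, add_zero, add_zero]
    rfl
  map_mul' := by
    intro u v
    show mk' p m _ _ = mk' p m _ _ * mk' p m _ _
    rw [mk'_mul]
    have h1 : (u * v).1.toAdd = u.1.toAdd + v.1.toAdd := rfl
    have h2 : (u * v).2.toAdd = u.2.toAdd + v.2.toAdd := rfl
    rw [h1, h2, lf_add, map_add]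
    congr 1 <;> ring

lemma alphaHom_mk' (a b) : alphaHom p m (mk' p m a b) = mk' p m (a + lf p m b) (pr p m a + b) := rfl

lemma alphaHom_inj : Function.Injective (alphaHom p m) := by
  rw [injective_iff_map_eq_one]
  intro u hu
  rw [mk'_eta p m u, alphaHom_mk'] at hu
  have h := mk'_inj p m (hu.trans (mk'_one p m))
  have hb : pr p m u.1.toAdd = 0 := by
    have := congrArg (pr p m) h.1
    rw [map_add, pr_lf, map_zero, add_zero] at this
    exact this
  have hb2 : u.2.toAdd = 0 := by
    have := h.2
    rw [hb, zero_add] at this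
    exact this
  have ha : u.1.toAdd = 0 := by
    have := h.1
    rw [hb2, lf_zero, add_zero] at this
    exact this
  rw [mk'_eta p m u, ha, hb2]
  rfl

noncomputable def alpha : V p m ≃* V p m :=
  MulEquiv.ofBijective (alphaHom p m)
    (Finite.injective_iff_bijective.mp (alphaHom_inj p m))

lemma alpha_apply (g : V p m) : alpha p m g = alphaHom p m g := rfl

lemma alpha_xi (hodd : Odd p) (i : ZMod p) : alpha p m (xi p m i) = xi p m (i + 1) := by
  rw [alpha_apply]
  show alphaHom p m (mk' p m _ _) = _
  rw [alphaHom_mk']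
  unfold xi
  congr 1
  · rw [cc_succ p hodd, lf_add]
    ring
  · rw [map_add, pr_one, pr_lf, add_zero, add_comm]

lemma alpha_et (b : ZMod p) : alpha p m (et p m b) = et p m (b + 1) := by
  rw [alpha_apply]
  show alphaHom p m (mk' p m _ _) = _
  rw [alphaHom_mk']
  unfold et
  congr 1
  · rw [lf_add]
  · rw [pr_lf, zero_add]

lemma alpha_mem_SS_iff (hodd : Odd p) (g : V p m) : alpha p m g ∈ SS p m ↔ g ∈ SS p m := by
  constructor
  · intro h
    rw [mem_SS_iff] at h ⊢
    rcases h with ⟨i, hi⟩ | ⟨b, hb⟩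
    · left
      refine ⟨i - 1, ?_⟩
      have hx : alpha p m (xi p m (i-1)) = xi p m i := by rw [alpha_xi p m hodd, sub_add_cancel]
      exact ((alpha p m).injective (by rw [hx, ← hi])).symm
    · right
      refine ⟨b - 1, ?_⟩
      have hx : alpha p m (et p m (b-1)) = et p m b := by rw [alpha_et, sub_add_cancel]
      exact ((alpha p m).injective (by rw [hx, ← hb])).symm
  · intro h
    rw [mem_SS_iff] at h ⊢
    rcases h with ⟨i, hi⟩ | ⟨b, hb⟩
    · exact Or.inl ⟨i + 1, by rw [hi, alpha_xi p m hodd]⟩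
    · exact Or.inr ⟨b + 1, by rw [hb, alpha_et]⟩

lemma apow_succ_apply (k : ℕ) (v : V p m) :
    ((alpha p m) ^ (k+1) : V p m ≃* V p m) v = ((alpha p m)^k : V p m ≃* V p m) (alpha p m v) := by
  have h : (alpha p m)^(k+1) = (alpha p m)^k * alpha p m := pow_succ _ _
  rw [h]
  rfl

lemma apow_xi (hodd : Odd p) (k : ℕ) (i : ZMod p) :
    ((alpha p m)^k : V p m ≃* V p m) (xi p m i) = xi p m (i + k) := by
  induction k generalizing i with
  | zero => simp
  | succ k ih =>
    rw [apow_succ_apply, alpha_xi p m hodd, ih]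
    congr 1
    push_cast
    ring

lemma apow_et (k : ℕ) (b : ZMod p) :
    ((alpha p m)^k : V p m ≃* V p m) (et p m b) = et p m (b + k) := by
  induction k generalizing b with
  | zero => simp
  | succ k ih =>
    rw [apow_succ_apply, alpha_et, ih]
    congr 1
    push_cast
    ring

lemma apow_mem_SS_iff (hodd : Odd p) (k : ℕ) (g : V p m) :
    ((alpha p m)^k : V p m ≃* V p m) g ∈ SS p m ↔ g ∈ SS p m := by
  induction k generalizing g with
  | zero => simp
  | succ k ih => rw [apow_succ_apply, ih, alpha_mem_SS_iff p m hodd]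

lemma apow_mem_dAut (hodd : Odd p) (k : ℕ) :
    (((alpha p m)^k : V p m ≃* V p m) : Equiv.Perm (V p m)) ∈ dAut (cayAdj (V p m) (SS p m)) := by
  intro u v
  show cayAdj _ _ (((alpha p m)^k : V p m ≃* V p m) u) (((alpha p m)^k : V p m ≃* V p m) v) ↔ _
  unfold cayAdj
  rw [← map_inv, ← map_mul]
  exact apow_mem_SS_iff p m hodd k _

lemma mk'_pow (a b) (k : ℕ) : (mk' p m a b)^k = mk' p m (k • a) (k • b) := by
  induction k with
  | zero => simp; rfl
  | succ k ih =>
    rw [pow_succ, ih, mk'_mul, succ_nsmul, succ_nsmul]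

lemma xi_zero : xi p m 0 = mk' p m 1 0 := by
  unfold xi
  rw [cc_zero, lf_zero, add_zero]

lemma et_zero : et p m 0 = mk' p m 0 1 := by
  unfold et
  rw [lf_zero]

lemma decomp (g : V p m) :
    g = (xi p m 0)^((g.1.toAdd).val) * (et p m 0)^((g.2.toAdd).val) := by
  rw [xi_zero, et_zero, mk'_pow, mk'_pow, mk'_mul]
  show mk' p m g.1.toAdd g.2.toAdd = mk' p m _ _
  congr 1
  · simp [nsmul_eq_mul, ZMod.natCast_val, ZMod.cast_id]
  · simp [nsmul_eq_mul, ZMod.natCast_val, ZMod.cast_id]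

lemma alpha_pow_p (hodd : Odd p) (g : V p m) :
    ((alpha p m)^p : V p m ≃* V p m) g = g := by
  conv_lhs => rw [decomp p m g]
  rw [map_mul, map_pow, map_pow, apow_xi p m hodd, apow_et, ZMod.natCast_self, add_zero]
  exact (decomp p m g).symm



lemma mem_xi (i : ZMod p) : xi p m i ∈ SS p m := (mem_SS_iff p m).mpr (Or.inl ⟨i, rfl⟩)
lemma mem_et (b : ZMod p) : et p m b ∈ SS p m := (mem_SS_iff p m).mpr (Or.inr ⟨b, rfl⟩)

lemma et_mul_xi (hodd : Odd p) (i : ZMod p) : et p m i * xi p m i = xi p m (i+1) := by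
  rw [← xi_div_xi p m hodd i, inv_mul_cancel_right]

lemma xi_mul_et (hodd : Odd p) (b : ZMod p) : xi p m b * et p m b = xi p m (b+1) := by
  rw [← xi_div_et p m hodd b, inv_mul_cancel_right]

lemma core (hodd : Odd p) (σ : Equiv.Perm (V p m))
    (hσ : σ ∈ dAut (cayAdj (V p m) (SS p m))) (u : V p m) (hu : σ u = u) :
    ∃ k : ZMod p, (∀ i, σ (xi p m i * u) = xi p m (i+k) * u) ∧
                  (∀ b, σ (et p m b * u) = et p m (b+k) * u) := by
  have hadj : ∀ v w, cayAdj (V p m) (SS p m) (σ v) (σ w) ↔ cayAdj (V p m) (SS p m) v w := hσ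
  have harc : ∀ s : V p m, cayAdj (V p m) (SS p m) u (s * u) ↔ s ∈ SS p m := by
    intro s
    show s * u * u⁻¹ ∈ SS p m ↔ _
    rw [mul_inv_cancel_right]
  have himg : ∀ s ∈ SS p m, ∃ t ∈ SS p m, σ (s * u) = t * u := by
    intro s hs
    have h1 : cayAdj (V p m) (SS p m) u (s*u) := (harc s).mpr hs
    have h2 := (hadj u (s*u)).mpr h1
    rw [hu] at h2
    exact ⟨σ (s*u) * u⁻¹, h2, by rw [inv_mul_cancel_right]⟩
  have hxi : ∀ i : ZMod p, ∃ j, σ (xi p m i * u) = xi p m j * u := by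
    intro i
    obtain ⟨t, ht, hteq⟩ := himg (xi p m i) (mem_xi p m i)
    obtain ⟨t', ht', hteq'⟩ := himg (xi p m (i-1)) (mem_xi p m (i-1))
    have ha : cayAdj (V p m) (SS p m) (xi p m (i-1) * u) (xi p m i * u) :=
      (arc_translate p m _ _ _).mpr ((arc_xi_xi p m).mpr (by ring))
    have hb : cayAdj (V p m) (SS p m) (t' * u) (t * u) := by
      rw [← hteq', ← hteq]
      exact (hadj _ _).mpr ha
    have hc := (arc_translate p m _ _ _).mp hb
    rcases (mem_SS_iff p m).mp ht with ⟨j, rfl⟩ | ⟨b, rfl⟩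
    · exact ⟨j, hteq⟩
    · exfalso
      rcases (mem_SS_iff p m).mp ht' with ⟨i', rfl⟩ | ⟨b', rfl⟩
      · exact arc_xi_et p m hodd hc
      · exact arc_et_et p m hc
  choose f hf using hxi
  have hf1 : ∀ i, f (i+1) = f i + 1 := by
    intro i
    have ha : cayAdj (V p m) (SS p m) (xi p m i * u) (xi p m (i+1) * u) :=
      (arc_translate p m _ _ _).mpr ((arc_xi_xi p m).mpr rfl)
    have hb : cayAdj (V p m) (SS p m) (xi p m (f i) * u) (xi p m (f (i+1)) * u) := by
      rw [← hf, ← hf]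
      exact (hadj _ _).mpr ha
    exact (arc_xi_xi p m).mp ((arc_translate p m _ _ _).mp hb)
  have hfnat : ∀ t : ℕ, f ((t : ZMod p)) = (t : ZMod p) + f 0 := by
    intro t
    induction t with
    | zero => simp
    | succ t ih =>
      push_cast
      rw [hf1, ih]
      ring
  have hfall : ∀ i, f i = i + f 0 := by
    intro i
    have := hfnat i.val
    rwa [ZMod.natCast_val, ZMod.cast_id] at this
  refine ⟨f 0, fun i => by rw [hf, hfall], ?_⟩
  intro b
  obtain ⟨t, ht, hteq⟩ := himg (et p m b) (mem_et p m b)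
  rcases (mem_SS_iff p m).mp ht with ⟨j, rfl⟩ | ⟨b', rfl⟩
  · exfalso
    have h1 : σ (xi p m (j - f 0) * u) = xi p m j * u := by
      rw [hf, hfall, sub_add_cancel]
    have h2 : xi p m (j - f 0) * u = et p m b * u := σ.injective (h1.trans hteq.symm)
    exact xi_ne_et p m _ _ (mul_right_cancel h2)
  · have ha : cayAdj (V p m) (SS p m) (et p m b * u) (xi p m (b+1) * u) :=
      (arc_translate p m _ _ _).mpr ((arc_et_xi p m hodd).mpr rfl)
    have hb : cayAdj (V p m) (SS p m) (et p m b' * u) (xi p m (b + 1 + f 0) * u) := by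
      have h2 : σ (xi p m (b+1) * u) = xi p m (b+1+f 0) * u := by rw [hf, hfall]
      rw [← hteq, ← h2]
      exact (hadj _ _).mpr ha
    have hc := (arc_et_xi p m hodd).mp ((arc_translate p m _ _ _).mp hb)
    have hb'' : b' = b + f 0 := by linear_combination -hc
    rw [hteq, hb'']

def Pfix (σ : Equiv.Perm (V p m)) (w : V p m) : Prop :=
  σ w = w ∧ ∀ s ∈ SS p m, σ (s * w) = s * w

lemma rigid (hodd : Odd p) (σ : Equiv.Perm (V p m))
    (hσ : σ ∈ dAut (cayAdj (V p m) (SS p m))) (h1 : σ 1 = 1)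
    (hxi : ∀ i, σ (xi p m i) = xi p m i) (het : ∀ b, σ (et p m b) = et p m b) :
    ∀ v, σ v = v := by
  have hP1 : Pfix p m σ 1 := by
    constructor
    · exact h1
    · intro s hs
      rw [mul_one]
      rcases (mem_SS_iff p m).mp hs with ⟨i, rfl⟩ | ⟨b, rfl⟩
      · exact hxi i
      · exact het b
  have key : ∀ w, Pfix p m σ w → ∀ s ∈ SS p m, Pfix p m σ (s * w) := by
    rintro w ⟨hw, hws⟩ s hs
    refine ⟨hws s hs, ?_⟩
    obtain ⟨k, hk1, hk2⟩ := core p m hodd σ hσ (s*w) (hws s hs)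
    have hk0 : k = 0 := by
      rcases (mem_SS_iff p m).mp hs with ⟨i, rfl⟩ | ⟨b, rfl⟩
      · have he : et p m i * (xi p m i * w) = xi p m (i+1) * w := by
          rw [← mul_assoc, et_mul_xi p m hodd]
        have h3 : σ (et p m i * (xi p m i * w)) = et p m (i + k) * (xi p m i * w) := hk2 i
        rw [he, hws _ (mem_xi p m (i+1))] at h3
        have h4 : et p m (i+k) * (xi p m i * w) = et p m i * (xi p m i * w) := by
          rw [he]; exact h3.symm
        have h5 := et_inj p m (mul_right_cancel h4)
        linear_combination h5
      · have he : xi p m b * (et p m b * w) = xi p m (b+1) * w := by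
          rw [← mul_assoc, xi_mul_et p m hodd]
        have h3 : σ (xi p m b * (et p m b * w)) = xi p m (b + k) * (et p m b * w) := hk1 b
        rw [he, hws _ (mem_xi p m (b+1))] at h3
        have h4 : xi p m (b+k) * (et p m b * w) = xi p m b * (et p m b * w) := by
          rw [he]; exact h3.symm
        have h5 := xi_inj p m (mul_right_cancel h4)
        linear_combination h5
    intro t ht
    rcases (mem_SS_iff p m).mp ht with ⟨i, rfl⟩ | ⟨b, rfl⟩
    · have := hk1 i; rwa [hk0, add_zero] at this
    · have := hk2 b; rwa [hk0, add_zero] at this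
  have hPy : ∀ t : ℕ, Pfix p m σ ((et p m 0)^t) := by
    intro t
    induction t with
    | zero => simpa using hP1
    | succ t ih =>
      rw [pow_succ' (et p m 0) t]
      exact key _ ih _ (mem_et p m 0)
  have hPxy : ∀ s t : ℕ, Pfix p m σ ((xi p m 0)^s * (et p m 0)^t) := by
    intro s t
    induction s with
    | zero => rw [pow_zero, one_mul]; exact hPy t
    | succ s ih =>
      rw [pow_succ' (xi p m 0) s, mul_assoc]
      exact key _ ih _ (mem_xi p m 0)
  intro v
  have := (hPxy (v.1.toAdd.val) (v.2.toAdd.val)).1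
  rwa [← decomp p m v] at this

lemma stab_classify (hodd : Odd p) (σ : Equiv.Perm (V p m))
    (hσ : σ ∈ dAut (cayAdj (V p m) (SS p m))) (h1 : σ 1 = 1) :
    ∃ k : ZMod p, ∀ v, σ v = ((alpha p m)^(k.val) : V p m ≃* V p m) v := by
  have h1' : σ 1 = 1 * 1 := by rw [h1, mul_one]
  obtain ⟨k, hk1, hk2⟩ := core p m hodd σ hσ 1 h1
  refine ⟨k, ?_⟩
  set A : V p m ≃* V p m := ((alpha p m)^(k.val) : V p m ≃* V p m) with hA
  have hcast : ((k.val : ℕ) : ZMod p) = k := by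
    rw [ZMod.natCast_val, ZMod.cast_id]
  have hAxi : ∀ i, A (xi p m i) = xi p m (i + k) := by
    intro i; rw [hA, apow_xi p m hodd, hcast]
  have hAet : ∀ b, A (et p m b) = et p m (b + k) := by
    intro b; rw [hA, apow_et, hcast]
  have hAperm : (A : Equiv.Perm (V p m)) ∈ dAut (cayAdj (V p m) (SS p m)) :=
    apow_mem_dAut p m hodd k.val
  set τ : Equiv.Perm (V p m) := σ.trans A.toEquiv.symm with hτdef
  have hτeq : τ = ((A : Equiv.Perm (V p m)))⁻¹ * σ := rfl
  have hτ : τ ∈ dAut (cayAdj (V p m) (SS p m)) := by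
    rw [hτeq]
    exact mul_mem (inv_mem hAperm) hσ
  have hτ1 : τ 1 = 1 := by
    show A.toEquiv.symm (σ 1) = 1
    rw [h1]
    exact map_one A.symm
  have hτxi : ∀ i, τ (xi p m i) = xi p m i := by
    intro i
    show A.toEquiv.symm (σ (xi p m i)) = xi p m i
    have : σ (xi p m i) = xi p m (i + k) := by
      have := hk1 i
      rwa [mul_one, mul_one] at this
    rw [this, ← hAxi i]
    exact A.toEquiv.symm_apply_apply _
  have hτet : ∀ b, τ (et p m b) = et p m b := by
    intro b
    show A.toEquiv.symm (σ (et p m b)) = et p m b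
    have : σ (et p m b) = et p m (b + k) := by
      have := hk2 b
      rwa [mul_one, mul_one] at this
    rw [this, ← hAet b]
    exact A.toEquiv.symm_apply_apply _
  have hfix := rigid p m hodd τ hτ hτ1 hτxi hτet
  intro v
  have h5 : A.toEquiv.symm (σ v) = v := hfix v
  have := congrArg A h5
  rwa [show A (A.toEquiv.symm (σ v)) = σ v from A.toEquiv.apply_symm_apply _] at this



instance : NeZero (p ^ (m + 2)) := ⟨pow_ne_zero _ (Fact.out : p.Prime).ne_zero⟩

lemma xi_snd (i : ZMod p) : ((xi p m i).2).toAdd = i := rfl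

lemma tr_mem_dAut (g : V p m) :
    (Equiv.mulRight g : Equiv.Perm (V p m)) ∈ dAut (cayAdj (V p m) (SS p m)) := by
  intro u v
  exact arc_translate p m u v g

lemma hcastval (k : ZMod p) : ((k.val : ℕ) : ZMod p) = k := by
  rw [ZMod.natCast_val, ZMod.cast_id]

noncomputable def dAutEquiv (hodd : Odd p) :
    (dAut (cayAdj (V p m) (SS p m))) ≃ (V p m × ZMod p) where
  toFun σ := (σ.1 1, ((σ.1.trans (Equiv.mulRight (σ.1 1)⁻¹)) (xi p m 0)).2.toAdd)
  invFun gk := ⟨((alpha p m)^(gk.2.val) : V p m ≃* V p m).toEquiv.trans (Equiv.mulRight gk.1),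
    mul_mem (tr_mem_dAut p m gk.1) (apow_mem_dAut p m hodd gk.2.val)⟩
  left_inv := by
    rintro ⟨σ, hσ⟩
    set g := σ 1 with hg
    set τ : Equiv.Perm (V p m) := σ.trans (Equiv.mulRight g⁻¹) with hτ
    have hτmem : τ ∈ dAut (cayAdj (V p m) (SS p m)) :=
      mul_mem (tr_mem_dAut p m g⁻¹) hσ
    have hτ1 : τ 1 = 1 := by
      show σ 1 * g⁻¹ = 1
      rw [← hg, mul_inv_cancel]
    obtain ⟨k, hk⟩ := stab_classify p m hodd τ hτmem hτ1
    have hkof : ((σ.trans (Equiv.mulRight (σ 1)⁻¹)) (xi p m 0)).2.toAdd = k := by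
      show (τ (xi p m 0)).2.toAdd = k
      rw [hk, apow_xi p m hodd, hcastval, zero_add, xi_snd]
    apply Subtype.ext
    apply Equiv.ext
    intro v
    show ((alpha p m)^((((σ.trans (Equiv.mulRight (σ 1)⁻¹)) (xi p m 0)).2.toAdd).val) : V p m ≃* V p m) v * σ 1 = σ v
    rw [hkof]
    have hv := hk v
    show ((alpha p m)^(k.val) : V p m ≃* V p m) v * g = σ v
    rw [← hv]
    show σ v * g⁻¹ * g = σ v
    rw [inv_mul_cancel_right]
  right_inv := by
    rintro ⟨g, k⟩
    have h1 : (((alpha p m)^(k.val) : V p m ≃* V p m).toEquiv.trans (Equiv.mulRight g)) 1 = g := by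
      show ((alpha p m)^(k.val) : V p m ≃* V p m) 1 * g = g
      rw [map_one, one_mul]
    refine Prod.ext ?_ ?_
    · exact h1
    · show ((((alpha p m)^(k.val) : V p m ≃* V p m).toEquiv.trans (Equiv.mulRight g)).trans
        (Equiv.mulRight _⁻¹) (xi p m 0)).2.toAdd = k
      rw [h1]
      show (((alpha p m)^(k.val) : V p m ≃* V p m) (xi p m 0) * g * g⁻¹).2.toAdd = k
      rw [mul_inv_cancel_right, apow_xi p m hodd, hcastval, zero_add, xi_snd]

lemma card_dAut (hodd : Odd p) :
    Nat.card (dAut (cayAdj (V p m) (SS p m))) = Nat.card (V p m) * p := by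
  rw [Nat.card_congr (dAutEquiv p m hodd), Nat.card_prod, Nat.card_zmod]

lemma rightReg_inj : Function.Injective (rightReg (V p m)) := by
  intro a b h
  have := congrArg (fun σ => (σ : Equiv.Perm (V p m)) 1) h
  simp only [rightReg] at this
  have h2 : a⁻¹ = b⁻¹ := by simpa using this
  exact inv_injective h2

lemma range_le_dAut : (rightReg (V p m)).range ≤ dAut (cayAdj (V p m) (SS p m)) := by
  rintro σ ⟨g, rfl⟩
  exact tr_mem_dAut p m g⁻¹

lemma card_V_pos : 0 < Nat.card (V p m) := Nat.card_pos

lemma cayRR_index (hodd : Odd p) : (cayleyRR (V p m) (SS p m)).index = p := by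
  have e1 : Nat.card (cayleyRR (V p m) (SS p m)) = Nat.card (V p m) := by
    show Nat.card ((rightReg (V p m)).range.subgroupOf (dAut (cayAdj (V p m) (SS p m)))) = _
    rw [Nat.card_congr (Subgroup.subgroupOfEquivOfLe (range_le_dAut p m)).toEquiv]
    exact (Nat.card_congr (MonoidHom.ofInjective (rightReg_inj p m)).toEquiv).symm
  have e2 := Subgroup.card_mul_index (cayleyRR (V p m) (SS p m))
  rw [e1, card_dAut p m hodd] at e2
  exact Nat.eq_of_mul_eq_mul_left (card_V_pos p m) e2

-- ### the nonabelian regular subgroup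
def ph (g : V p m) : ZMod p := pr p m g.1.toAdd

lemma ph_mul (g g' : V p m) : ph p m (g * g') = ph p m g + ph p m g' := by
  unfold ph
  rw [show (g * g').1.toAdd = g.1.toAdd + g'.1.toAdd from rfl, map_add]

lemma ph_inv (g : V p m) : ph p m g⁻¹ = - ph p m g := by
  unfold ph
  rw [show (g⁻¹).1.toAdd = -(g.1.toAdd) from rfl, map_neg]

lemma ph_one : ph p m 1 = 0 := by
  unfold ph
  rw [show ((1 : V p m)).1.toAdd = 0 from rfl, map_zero]

lemma ph_alpha (v : V p m) : ph p m (alpha p m v) = ph p m v := by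
  unfold ph
  rw [alpha_apply]
  show pr p m (v.1.toAdd + lf p m v.2.toAdd) = _
  rw [map_add, pr_lf, add_zero]

lemma ph_apow (k : ℕ) (v : V p m) :
    ph p m (((alpha p m)^k : V p m ≃* V p m) v) = ph p m v := by
  induction k generalizing v with
  | zero => rfl
  | succ k ih => rw [apow_succ_apply, ih, ph_alpha]

lemma apow_cast_eq (hodd : Odd p) {s t : ℕ} (h : (s : ZMod p) = (t : ZMod p)) (v : V p m) :
    ((alpha p m)^s : V p m ≃* V p m) v = ((alpha p m)^t : V p m ≃* V p m) v := by
  conv_lhs => rw [decomp p m v]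
  conv_rhs => rw [decomp p m v]
  rw [map_mul, map_mul, map_pow, map_pow, map_pow, map_pow,
      apow_xi p m hodd, apow_et, apow_xi p m hodd, apow_et, h]

noncomputable def hperm (g : V p m) : Equiv.Perm (V p m) :=
  ((alpha p m)^((ph p m g).val) : V p m ≃* V p m).toEquiv.trans (Equiv.mulRight g)

lemma hperm_apply (g v : V p m) :
    hperm p m g v = ((alpha p m)^((ph p m g).val) : V p m ≃* V p m) v * g := rfl

lemma hperm_one_apply (g : V p m) : hperm p m g 1 = g := by
  rw [hperm_apply, map_one, one_mul]

lemma ph_hperm (g v : V p m) : ph p m (hperm p m g v) = ph p m v + ph p m g := by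
  rw [hperm_apply, ph_mul, ph_apow]

lemma hperm_comp (hodd : Odd p) (a b : V p m) :
    hperm p m a * hperm p m b =
      hperm p m (((alpha p m)^((ph p m a).val) : V p m ≃* V p m) b * a) := by
  apply Equiv.ext
  intro v
  show hperm p m a (hperm p m b v) = _
  rw [hperm_apply, hperm_apply, hperm_apply]
  rw [map_mul]
  have hph : ph p m (((alpha p m)^((ph p m a).val) : V p m ≃* V p m) b * a)
      = ph p m b + ph p m a := by rw [ph_mul, ph_apow]
  rw [hph]
  have hc : ((alpha p m)^((ph p m a).val) : V p m ≃* V p m)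
      (((alpha p m)^((ph p m b).val) : V p m ≃* V p m) v)
      = ((alpha p m)^((ph p m b + ph p m a).val) : V p m ≃* V p m) v := by
    have h1 : ((alpha p m)^((ph p m a).val + (ph p m b).val) : V p m ≃* V p m) v
        = ((alpha p m)^((ph p m b + ph p m a).val) : V p m ≃* V p m) v := by
      apply apow_cast_eq p m hodd
      push_cast [hcastval]
      ring
    rw [← h1]
    have h2 : ((alpha p m)^((ph p m a).val + (ph p m b).val) : V p m ≃* V p m)
        = ((alpha p m)^((ph p m a).val) : V p m ≃* V p m) * ((alpha p m)^((ph p m b).val) : V p m ≃* V p m) :=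
      pow_add _ _ _
    rw [h2]
    rfl
  rw [← hc]
  rw [mul_assoc]

noncomputable def HH (hodd : Odd p) : Subgroup (Equiv.Perm (V p m)) where
  carrier := {σ | ∃ g, σ = hperm p m g}
  one_mem' := by
    refine ⟨1, ?_⟩
    apply Equiv.ext
    intro v
    rw [hperm_apply, ph_one, ZMod.val_zero, pow_zero, mul_one]
    rfl
  mul_mem' := by
    rintro σ τ ⟨a, rfl⟩ ⟨b, rfl⟩
    exact ⟨_, hperm_comp p m hodd a b⟩
  inv_mem' := by
    rintro σ ⟨a, rfl⟩
    set g'' : V p m := ((alpha p m)^(((- ph p m a)).val) : V p m ≃* V p m) a⁻¹ with hg''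
    refine ⟨g'', ?_⟩
    have hphg'' : ph p m g'' = - ph p m a := by
      rw [hg'', ph_apow, ph_inv]
    have hmul : hperm p m g'' * hperm p m a = 1 := by
      rw [hperm_comp p m hodd g'' a, hphg'', hg'']
      rw [← map_mul, mul_inv_cancel, map_one]
      apply Equiv.ext
      intro v
      rw [hperm_apply, ph_one, ZMod.val_zero, pow_zero, mul_one]
      rfl
    exact (eq_inv_of_mul_eq_one_left hmul).symm

lemma mem_HH (hodd : Odd p) (σ : Equiv.Perm (V p m)) :
    σ ∈ HH p m hodd ↔ ∃ g, σ = hperm p m g := Iff.rfl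

lemma HH_le_dAut (hodd : Odd p) : HH p m hodd ≤ dAut (cayAdj (V p m) (SS p m)) := by
  rintro σ ⟨g, rfl⟩
  show hperm p m g ∈ _
  have : hperm p m g = (Equiv.mulRight g : Equiv.Perm (V p m)) *
      (((alpha p m)^((ph p m g).val) : V p m ≃* V p m) : Equiv.Perm (V p m)) := rfl
  rw [this]
  exact mul_mem (tr_mem_dAut p m g) (apow_mem_dAut p m hodd _)

lemma HH_regular (hodd : Odd p) : IsRegularSub (HH p m hodd) := by
  intro v w
  have hker : ∀ g g' : V p m, hperm p m g v = hperm p m g' v → g = g' := by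
    intro g g' h
    have hph : ph p m v + ph p m g = ph p m v + ph p m g' := by
      rw [← ph_hperm, ← ph_hperm, h]
    have hph2 : ph p m g = ph p m g' := by linear_combination hph
    rw [hperm_apply, hperm_apply, hph2] at h
    exact mul_left_cancel h
  set k : ZMod p := ph p m w - ph p m v with hk
  set g : V p m := (((alpha p m)^(k.val) : V p m ≃* V p m) v)⁻¹ * w with hgdef
  have hphg : ph p m g = k := by
    rw [hgdef, ph_mul, ph_inv, ph_apow]
    ring
  have hgv : hperm p m g v = w := by
    rw [hperm_apply, hphg, hgdef, ← mul_assoc, mul_inv_cancel, one_mul]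
  refine ⟨⟨hperm p m g, ⟨g, rfl⟩⟩, hgv, ?_⟩
  rintro ⟨σ, ⟨g', rfl⟩⟩ hg'
  have : g' = g := hker g' g (by rw [hgv]; exact hg')
  exact Subtype.ext (by rw [this])

lemma HH_nonabelian (hodd : Odd p) :
    ¬ ∀ a ∈ HH p m hodd, ∀ b ∈ HH p m hodd, a * b = b * a := by
  intro hcomm
  have ha : hperm p m (xi p m 0) ∈ HH p m hodd := ⟨_, rfl⟩
  have hb : hperm p m (et p m 0) ∈ HH p m hodd := ⟨_, rfl⟩
  have h := hcomm _ ha _ hb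
  have h1 := congrArg (fun σ : Equiv.Perm (V p m) => σ 1) h
  simp only [Equiv.Perm.mul_apply] at h1
  rw [hperm_one_apply, hperm_one_apply] at h1
  -- h1 : hperm (xi 0) (et 0) = hperm (et 0) (xi 0)
  have hphxi : ph p m (xi p m 0) = 1 := by
    unfold ph xi
    show pr p m (1 + lf p m (cc p 0)) = 1
    rw [cc_zero, lf_zero, add_zero, pr_one]
  have hphet : ph p m (et p m 0) = 0 := by
    unfold ph et
    show pr p m (lf p m 0) = 0
    rw [pr_lf]
  rw [hperm_apply, hperm_apply, hphxi, hphet] at h1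
  rw [ZMod.val_zero, pow_zero] at h1
  have hval1 : ((1 : ZMod p)).val = 1 := by
    haveI : Fact (1 < p) := ⟨(Fact.out : p.Prime).one_lt⟩
    exact ZMod.val_one p
  rw [hval1, pow_one] at h1
  have ha1 : (alpha p m) (et p m 0) = et p m 1 := by rw [alpha_et, zero_add]
  rw [ha1] at h1
  have h2 : et p m 1 * xi p m 0 = et p m 0 * xi p m 0 := by
    rw [h1]
    show (1 : V p m ≃* V p m) (xi p m 0) * et p m 0 = _
    rw [show (1 : V p m ≃* V p m) (xi p m 0) = xi p m 0 from rfl, mul_comm]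
  have h3 := et_inj p m (mul_right_cancel h2)
  exact one_ne_zero'' p (by linear_combination h3)



lemma mem_dAut_iff' {X : Type*} (adj : X → X → Prop) (σ : Equiv.Perm X) :
    σ ∈ dAut adj ↔ ∀ u v, adj (σ u) (σ v) ↔ adj u v := Iff.rfl

lemma one_notin_SS : (1 : V p m) ∉ SS p m := by
  intro h
  rw [mk'_one, mk'_mem_SS] at h
  rcases h with h | ⟨b', h1, h2⟩
  · have := congrArg (pr p m) h
    rw [map_zero, map_add, pr_one, cc_zero, pr_lf, add_zero] at this
    exact one_ne_zero'' p this.symm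
  · exact one_ne_zero'' p h2.symm

lemma arc_one_xi0 : cayAdj (V p m) (SS p m) 1 (xi p m 0) := by
  show xi p m 0 * 1⁻¹ ∈ SS p m
  rw [inv_one, mul_one]
  exact (mem_SS_iff p m).mpr (Or.inl ⟨0, rfl⟩)

lemma no_arc_xi0_one (hodd : Odd p) : ¬ cayAdj (V p m) (SS p m) (xi p m 0) 1 := by
  show 1 * (xi p m 0)⁻¹ ∉ SS p m
  rw [one_mul]
  intro h
  have h0 : (xi p m 0)⁻¹ = mk' p m (-(1 + lf p m (cc p 0))) (-0) := rfl
  rw [h0, cc_zero, lf_zero, add_zero, neg_zero, mk'_mem_SS] at h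
  rcases h with h | ⟨b', h1, h2⟩
  · have := congrArg (pr p m) h
    rw [map_neg, map_add, pr_one, cc_zero, pr_lf, add_zero] at this
    exact two_ne_zero' p hodd (by linear_combination -this)
  · exact one_ne_zero'' p h2.symm

-- transport
variable {W : Type*} [Group W]

def permCongrMul (e : W ≃ V p m) : Equiv.Perm W ≃* Equiv.Perm (V p m) where
  toFun σ := (e.symm.trans σ).trans e
  invFun τ := (e.trans τ).trans e.symm
  left_inv σ := by
    apply Equiv.ext
    intro v
    simp
  right_inv τ := by
    apply Equiv.ext
    intro v
    simp
  map_mul' σ τ := by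
    apply Equiv.ext
    intro v
    simp [Equiv.Perm.mul_apply]

lemma permCongrMul_apply (e : W ≃ V p m) (σ : Equiv.Perm W) (v : V p m) :
    permCongrMul p m e σ v = e (σ (e.symm v)) := rfl

lemma permCongrMul_symm_apply (e : W ≃ V p m) (τ : Equiv.Perm (V p m)) (w : W) :
    (permCongrMul p m e).symm τ w = e.symm (τ (e w)) := rfl

end S12

/-- For `G ≅ Z_{p^n} × Z_p` (`p` an odd prime, `n ≥ 2`) there is a proper Cayley
digraph on `G` with Cayley index exactly `p` whose automorphism group contains a
nonabelian regular subgroup. -/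
theorem stmt_12 {G : Type*} [CommGroup G] [Fintype G] (p n : ℕ) (hp : p.Prime)
    (hodd : Odd p) (hn : 2 ≤ n)
    (hiso : Nonempty (G ≃* (Multiplicative (ZMod (p ^ n)) × Multiplicative (ZMod p)))) :
    ∃ S : Set G, (1 : G) ∉ S ∧
      (∃ u v : G, cayAdj G S u v ∧ ¬ cayAdj G S v u) ∧
      (cayleyRR G S).index = p ∧
      ∃ H : Subgroup (Equiv.Perm G), H ≤ dAut (cayAdj G S) ∧ IsRegularSub H ∧
        ¬ ∀ a ∈ H, ∀ b ∈ H, a * b = b * a := by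

  obtain ⟨m, rfl⟩ : ∃ m, n = m + 2 := ⟨n - 2, by omega⟩
  haveI : Fact p.Prime := ⟨hp⟩
  obtain ⟨e⟩ := hiso
  set ee : G ≃ S12.V p m := e.toEquiv with hee
  have he_mul : ∀ a b : G, ee (a * b) = ee a * ee b := fun a b => map_mul e a b
  have he_inv : ∀ a : G, ee a⁻¹ = (ee a)⁻¹ := fun a => map_inv e a
  have he_one : ee 1 = 1 := map_one e
  set S : Set G := ⇑ee ⁻¹' (S12.SS p m) with hS
  set Ψ : Equiv.Perm G ≃* Equiv.Perm (S12.V p m) := S12.permCongrMul p m ee with hΨ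
  have transfer : ∀ u v : G, cayAdj G S u v ↔ cayAdj (S12.V p m) (S12.SS p m) (ee u) (ee v) := by
    intro u v
    show v * u⁻¹ ∈ S ↔ ee v * (ee u)⁻¹ ∈ S12.SS p m
    rw [hS, Set.mem_preimage, he_mul, he_inv]
  have hΨap : ∀ (σ : Equiv.Perm G) (v : G), Ψ σ (ee v) = ee (σ v) := by
    intro σ v
    rw [hΨ, S12.permCongrMul_apply, ee.symm_apply_apply]
  have hD : dAut (cayAdj G S) = (dAut (cayAdj (S12.V p m) (S12.SS p m))).comap Ψ.toMonoidHom := by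
    ext σ
    rw [Subgroup.mem_comap]
    constructor
    · intro hσ
      have hσ' := (S12.mem_dAut_iff' (cayAdj G S) σ).mp hσ
      rw [show Ψ.toMonoidHom σ = Ψ σ from rfl, S12.mem_dAut_iff']
      intro u v
      rw [hΨ, S12.permCongrMul_apply, S12.permCongrMul_apply]
      rw [← transfer, hσ', transfer, ee.apply_symm_apply, ee.apply_symm_apply]
    · intro hσ
      have hσ' := (S12.mem_dAut_iff' _ (Ψ σ)).mp hσ
      rw [S12.mem_dAut_iff']
      intro u v
      have h2 := hσ' (ee u) (ee v)
      rw [hΨap, hΨap] at h2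
      rw [transfer, transfer, h2]
  have hΨreg : ∀ g : G, Ψ (rightReg G g) = rightReg (S12.V p m) (ee g) := by
    intro g
    apply Equiv.ext
    intro v
    show ee (ee.symm v * g⁻¹) = v * (ee g)⁻¹
    rw [he_mul, he_inv, ee.apply_symm_apply]
  have hR : (rightReg G).range = ((rightReg (S12.V p m)).range).comap Ψ.toMonoidHom := by
    ext σ
    constructor
    · rintro ⟨g, rfl⟩
      exact ⟨ee g, (hΨreg g).symm⟩
    · rintro ⟨h, hh⟩
      refine ⟨ee.symm h, ?_⟩
      apply Ψ.injective
      rw [hΨreg, ee.apply_symm_apply]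
      exact hh
  refine ⟨S, ?_, ?_, ?_, ?_⟩
  · intro h
    rw [hS, Set.mem_preimage, he_one] at h
    exact S12.one_notin_SS p m h
  · refine ⟨ee.symm 1, ee.symm (S12.xi p m 0), ?_, ?_⟩
    · rw [transfer, ee.apply_symm_apply, ee.apply_symm_apply]
      exact S12.arc_one_xi0 p m
    · rw [transfer, ee.apply_symm_apply, ee.apply_symm_apply]
      exact S12.no_arc_xi0_one p m hodd
  · show ((rightReg G).range.subgroupOf (dAut (cayAdj G S))).index = p
    rw [hR, hD]
    show Subgroup.relIndex _ _ = p
    rw [Subgroup.relIndex_comap]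
    rw [Subgroup.map_comap_eq_self_of_surjective Ψ.surjective]
    exact S12.cayRR_index p m hodd
  · refine ⟨(S12.HH p m hodd).comap Ψ.toMonoidHom, ?_, ?_, ?_⟩
    · intro σ hσ
      rw [hD, Subgroup.mem_comap]
      exact S12.HH_le_dAut p m hodd hσ
    · intro v w
      obtain ⟨h', hh'1, hh'2⟩ := S12.HH_regular p m hodd (ee v) (ee w)
      have hact : ∀ σ : Equiv.Perm G, (σ v = w ↔ Ψ σ (ee v) = ee w) := by
        intro σ
        rw [hΨap]
        exact ⟨fun h => by rw [h], fun h => ee.injective h⟩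
      refine ⟨⟨Ψ.symm h'.1, by
        rw [Subgroup.mem_comap]
        show Ψ (Ψ.symm h'.1) ∈ _
        rw [MulEquiv.apply_symm_apply]
        exact h'.2⟩, ?_, ?_⟩
      · show Ψ.symm h'.1 v = w
        rw [hact, MulEquiv.apply_symm_apply]
        exact hh'1
      · rintro ⟨σ, hσ⟩ hact2
        have h3 : (⟨Ψ σ, hσ⟩ : S12.HH p m hodd) = h' := by
          apply hh'2
          show Ψ σ (ee v) = ee w
          rw [← hact σ]
          exact hact2
        apply Subtype.ext
        show σ = Ψ.symm h'.1
        rw [← congrArg Subtype.val h3]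
        exact (Ψ.symm_apply_apply σ).symm
    · intro hcomm
      apply S12.HH_nonabelian p m hodd
      intro a ha b hb
      have ha' : Ψ.symm a ∈ (S12.HH p m hodd).comap Ψ.toMonoidHom := by
        rw [Subgroup.mem_comap]
        show Ψ (Ψ.symm a) ∈ _
        rw [MulEquiv.apply_symm_apply]
        exact ha
      have hb' : Ψ.symm b ∈ (S12.HH p m hodd).comap Ψ.toMonoidHom := by
        rw [Subgroup.mem_comap]
        show Ψ (Ψ.symm b) ∈ _
        rw [MulEquiv.apply_symm_apply]
        exact hb
      have hc := hcomm _ ha' _ hb'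
      have h2 := congrArg Ψ hc
      rw [map_mul, map_mul, MulEquiv.apply_symm_apply, MulEquiv.apply_symm_apply] at h2
      exact h2
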